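/- Let $A_1, A_2, A_3$ be three non-collinear points in $\mathbb{R}^2$ with positive weights $w_1, w_2, w_3$, and let $O \notin \{A_1, A_2, A_3\}$ be a point satisfying $\sum_{i=1}^3 w_i \, u(O, A_i) = 0$, where $u(O, A_i) = (A_i - O)/\|A_i - O\|$. Then $O$ minimizes $f(P) = \sum_{i=1}^3 w_i \|P - A_i\|$ over all $P \in \mathbb{R}^2$. -/

import Mathlib

open Real EuclideanGeometry

noncomputable def u (X Y : EuclideanSpace ℝ (Fin 2)) : EuclideanSpace ℝ (Fin 2) :=
  ‖Y - X‖⁻¹ • (Y - X)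

lemma key (A O P : EuclideanSpace ℝ (Fin 2)) (h : O ≠ A) :
    ‖O - A‖ + inner ℝ (u O A) (O - P) ≤ ‖P - A‖ := by
  have hn : ‖A - O‖ ≠ 0 := by
    simpa [sub_eq_zero] using fun h' => h h'.symm
  have h1 : (inner ℝ (u O A) (A - O) : ℝ) = ‖A - O‖ := by
    rw [u, real_inner_smul_left, real_inner_self_eq_norm_sq]
    field_simp
  have hu : ‖u O A‖ = 1 := by
    rw [u, norm_smul, norm_inv, norm_norm]
    field_simp
  have h2 : (inner ℝ (u O A) (A - P) : ℝ) ≤ ‖P - A‖ := by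
    calc (inner ℝ (u O A) (A - P) : ℝ) ≤ ‖u O A‖ * ‖A - P‖ := real_inner_le_norm _ _
    _ = ‖P - A‖ := by rw [hu, one_mul, norm_sub_rev]
  have h3 : (A - P) = (A - O) + (O - P) := by abel
  rw [h3, inner_add_right, h1] at h2
  rw [norm_sub_rev O A]
  linarith

theorem floating_balance_minimizes
    (A₁ A₂ A₃ O : EuclideanSpace ℝ (Fin 2)) (w₁ w₂ w₃ : ℝ)
    (hw₁ : 0 < w₁) (hw₂ : 0 < w₂) (hw₃ : 0 < w₃)
    (hnc : ¬ Collinear ℝ ({A₁, A₂, A₃} : Set (EuclideanSpace ℝ (Fin 2))))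
    (hO : O ∉ ({A₁, A₂, A₃} : Set (EuclideanSpace ℝ (Fin 2))))
    (hbal : w₁ • u O A₁ + w₂ • u O A₂ + w₃ • u O A₃ = 0) :
    ∀ P : EuclideanSpace ℝ (Fin 2),
      w₁ * ‖O - A₁‖ + w₂ * ‖O - A₂‖ + w₃ * ‖O - A₃‖ ≤
      w₁ * ‖P - A₁‖ + w₂ * ‖P - A₂‖ + w₃ * ‖P - A₃‖ := by
  intro P
  simp only [Set.mem_insert_iff, Set.mem_singleton_iff, not_or] at hO
  obtain ⟨h1, h2, h3⟩ := hO
  have k1 := key A₁ O P h1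
  have k2 := key A₂ O P h2
  have k3 := key A₃ O P h3
  have hz : w₁ * inner ℝ (u O A₁) (O - P) + w₂ * inner ℝ (u O A₂) (O - P)
      + w₃ * inner ℝ (u O A₃) (O - P) = 0 := by
    have := congrArg (fun v : EuclideanSpace ℝ (Fin 2) => (inner ℝ v (O - P) : ℝ)) hbal
    simp only [inner_add_left, real_inner_smul_left, inner_zero_left] at this
    linarith
  nlinarith [mul_le_mul_of_nonneg_left k1 hw₁.le, mul_le_mul_of_nonneg_left k2 hw₂.le,
    mul_le_mul_of_nonneg_left k3 hw₃.le]
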